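/- Let p ≥ 1, let γ : [0, s_f] → ℝᵖ be three times continuously differentiable with ‖γ′(s)‖ = 1 for all s, let w : [0, s_f] → ℝ be twice continuously differentiable with w(s) > 0 for all s, and let λ : [0, t_f] → [0, s_f] be differentiable with λ′(t) = √(w(λ(t))) for all t. Define q(t) = γ(λ(t)). Then q is three times differentiable and for all t: ‖q‴(t)‖ ≤ (3/2)·‖γ″(λ(t))‖·|w′(λ(t))|·√(w(λ(t))) + |w″(λ(t))|·√(w(λ(t))) + ‖γ‴(λ(t))‖·w(λ(t))^{3/2}. -/

import Mathlib

/-- Jerk bound for the trajectory `q(t) = γ(λ(t))`: for an arc-length parameterized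
`C³` path `γ` and a `C²` squared-speed profile `w`, the trajectory is three times
differentiable and
`‖q‴‖ ≤ (3/2)‖γ″(λ)‖·|w′(λ)|·√(w∘λ) + |w″(λ)|·√(w∘λ) + ‖γ‴(λ)‖·(w∘λ)^{3/2}`. -/
theorem stmt_17 (p : ℕ) (hp : 1 ≤ p) (sf tf : ℝ) (hsf : 0 ≤ sf) (htf : 0 ≤ tf)
    (γ : ℝ → EuclideanSpace ℝ (Fin p)) (w lam : ℝ → ℝ)
    (hγ : ContDiff ℝ 3 γ)
    (hγ1 : ∀ s ∈ Set.Icc (0 : ℝ) sf, ‖deriv γ s‖ = 1)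
    (hw : ContDiff ℝ 2 w)
    (hwpos : ∀ s ∈ Set.Icc (0 : ℝ) sf, 0 < w s)
    (hlamrange : ∀ t ∈ Set.Icc (0 : ℝ) tf, lam t ∈ Set.Icc (0 : ℝ) sf)
    (hlam : ∀ t, HasDerivAt lam (Real.sqrt (w (lam t))) t)
    (q : ℝ → EuclideanSpace ℝ (Fin p)) (hq : q = fun t => γ (lam t)) :
    ∀ t ∈ Set.Icc (0 : ℝ) tf,
      DifferentiableAt ℝ q t
      ∧ DifferentiableAt ℝ (deriv q) t
      ∧ DifferentiableAt ℝ (deriv (deriv q)) t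
      ∧ ‖deriv (deriv (deriv q)) t‖
          ≤ 3 / 2 * ‖deriv (deriv γ) (lam t)‖ * |deriv w (lam t)| * Real.sqrt (w (lam t))
            + |deriv (deriv w) (lam t)| * Real.sqrt (w (lam t))
            + ‖deriv (deriv (deriv γ)) (lam t)‖ * w (lam t) ^ ((3 : ℝ) / 2) := by
  -- regularity of γ and w and their derivatives
  have h3 : (3 : WithTop ℕ∞) = 2 + 1 := by norm_num
  have h2 : (2 : WithTop ℕ∞) = 1 + 1 := by norm_num
  have hγ' : ContDiff ℝ 2 (deriv γ) := by
    rw [h3] at hγ; exact (contDiff_succ_iff_deriv.mp hγ).2.2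
  have hγ'' : ContDiff ℝ 1 (deriv (deriv γ)) := by
    rw [h2] at hγ'; exact (contDiff_succ_iff_deriv.mp hγ').2.2
  have hw' : ContDiff ℝ 1 (deriv w) := by
    rw [h2] at hw; exact (contDiff_succ_iff_deriv.mp hw).2.2
  have hγd : Differentiable ℝ γ := hγ.differentiable (by norm_num)
  have hγ'd : Differentiable ℝ (deriv γ) := hγ'.differentiable (by norm_num)
  have hγ''d : Differentiable ℝ (deriv (deriv γ)) := hγ''.differentiable one_ne_zero
  have hwd : Differentiable ℝ w := hw.differentiable (by norm_num)
  have hw'd : Differentiable ℝ (deriv w) := hw'.differentiable one_ne_zero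
  have hlamd : Differentiable ℝ lam := fun t => (hlam t).differentiableAt
  -- first derivative, everywhere
  have hq1 : ∀ t, HasDerivAt q (Real.sqrt (w (lam t)) • deriv γ (lam t)) t := by
    intro t
    rw [hq]
    exact HasDerivAt.scomp t (hγd (lam t)).hasDerivAt (hlam t)
  have hderivq : deriv q = fun t => Real.sqrt (w (lam t)) • deriv γ (lam t) :=
    funext fun t => (hq1 t).deriv
  -- second derivative at points where w ∘ lam is positive
  have hq2 : ∀ t, 0 < w (lam t) →
      HasDerivAt (deriv q)
        (w (lam t) • deriv (deriv γ) (lam t)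
          + (deriv w (lam t) / 2) • deriv γ (lam t)) t := by
    intro t ht
    have hwl : HasDerivAt (fun t => w (lam t)) (deriv w (lam t) * Real.sqrt (w (lam t))) t :=
      HasDerivAt.comp t (hwd (lam t)).hasDerivAt (hlam t)
    have hv : HasDerivAt (fun t => Real.sqrt (w (lam t))) (deriv w (lam t) / 2) t := by
      have := HasDerivAt.comp t (Real.hasDerivAt_sqrt (ne_of_gt ht)) hwl
      have heq : 1 / (2 * Real.sqrt (w (lam t))) * (deriv w (lam t) * Real.sqrt (w (lam t)))
          = deriv w (lam t) / 2 := by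
        have hs : Real.sqrt (w (lam t)) ≠ 0 := ne_of_gt (Real.sqrt_pos.mpr ht)
        field_simp
      rw [heq] at this
      exact this
    have hγ'l : HasDerivAt (fun t => deriv γ (lam t))
        (Real.sqrt (w (lam t)) • deriv (deriv γ) (lam t)) t :=
      HasDerivAt.scomp t (hγ'd (lam t)).hasDerivAt (hlam t)
    have := hv.smul hγ'l
    rw [hderivq]
    rw [smul_smul, Real.mul_self_sqrt ht.le] at this
    exact this
  -- now fix t₀
  intro t₀ ht₀
  have hlr := hlamrange t₀ ht₀
  have hpos : 0 < w (lam t₀) := hwpos _ hlr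
  have hcont : ContinuousAt (fun t => w (lam t)) t₀ :=
    (hw.continuous.comp hlamd.continuous).continuousAt
  have hU : ∀ᶠ t in nhds t₀, 0 < w (lam t) := hcont.eventually (eventually_gt_nhds hpos)
  have h2ev : deriv (deriv q) =ᶠ[nhds t₀]
      fun t => w (lam t) • deriv (deriv γ) (lam t)
        + (deriv w (lam t) / 2) • deriv γ (lam t) := by
    filter_upwards [hU] with t ht
    exact (hq2 t ht).deriv
  -- third derivative at t₀
  set v : ℝ := Real.sqrt (w (lam t₀)) with hv_def
  have hvpos : 0 < v := Real.sqrt_pos.mpr hpos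
  have hwl : HasDerivAt (fun t => w (lam t)) (deriv w (lam t₀) * v) t₀ :=
    HasDerivAt.comp t₀ (hwd (lam t₀)).hasDerivAt (hlam t₀)
  have hB : HasDerivAt (fun t => deriv (deriv γ) (lam t))
      (v • deriv (deriv (deriv γ)) (lam t₀)) t₀ :=
    HasDerivAt.scomp t₀ (hγ''d (lam t₀)).hasDerivAt (hlam t₀)
  have hC : HasDerivAt (fun t => deriv w (lam t)) (deriv (deriv w) (lam t₀) * v) t₀ :=
    HasDerivAt.comp t₀ (hw'd (lam t₀)).hasDerivAt (hlam t₀)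
  have hD : HasDerivAt (fun t => deriv γ (lam t)) (v • deriv (deriv γ) (lam t₀)) t₀ :=
    HasDerivAt.scomp t₀ (hγ'd (lam t₀)).hasDerivAt (hlam t₀)
  have hg2 := (hwl.smul hB).add ((hC.div_const 2).smul hD)
  have h3d : HasDerivAt (deriv (deriv q))
      ((w (lam t₀) • (v • deriv (deriv (deriv γ)) (lam t₀))
          + (deriv w (lam t₀) * v) • deriv (deriv γ) (lam t₀))
        + ((deriv w (lam t₀) / 2) • (v • deriv (deriv γ) (lam t₀))
          + (deriv (deriv w) (lam t₀) * v / 2) • deriv γ (lam t₀))) t₀ :=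
    hg2.congr_of_eventuallyEq h2ev
  refine ⟨(hq1 t₀).differentiableAt, (hq2 t₀ hpos).differentiableAt,
    h3d.differentiableAt, ?_⟩
  rw [h3d.deriv]
  have hγ1t : ‖deriv γ (lam t₀)‖ = 1 := hγ1 _ hlr
  have hrp : w (lam t₀) ^ ((3 : ℝ) / 2) = w (lam t₀) * v := by
    rw [hv_def, Real.sqrt_eq_rpow, show (3 : ℝ)/2 = 1 + 1/2 by norm_num,
      Real.rpow_add hpos, Real.rpow_one]
  set A := ‖deriv (deriv γ) (lam t₀)‖
  set B := ‖deriv (deriv (deriv γ)) (lam t₀)‖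
  have hA : 0 ≤ A := norm_nonneg _
  have hB0 : 0 ≤ B := norm_nonneg _
  have key : ‖(w (lam t₀) • (v • deriv (deriv (deriv γ)) (lam t₀))
          + (deriv w (lam t₀) * v) • deriv (deriv γ) (lam t₀))
        + ((deriv w (lam t₀) / 2) • (v • deriv (deriv γ) (lam t₀))
          + (deriv (deriv w) (lam t₀) * v / 2) • deriv γ (lam t₀))‖
      ≤ w (lam t₀) * v * B + |deriv w (lam t₀)| * v * A
        + (|deriv w (lam t₀)| / 2 * v * A + |deriv (deriv w) (lam t₀)| * v / 2) := by
    refine le_trans (norm_add_le _ _) (add_le_add ?_ ?_)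
    · refine le_trans (norm_add_le _ _) (add_le_add ?_ ?_)
      · rw [norm_smul, norm_smul, Real.norm_eq_abs, Real.norm_eq_abs,
          abs_of_pos hpos, abs_of_pos hvpos, ← mul_assoc]
      · rw [norm_smul, Real.norm_eq_abs, abs_mul, abs_of_pos hvpos]
    · refine le_trans (norm_add_le _ _) (add_le_add ?_ ?_)
      · rw [norm_smul, norm_smul, Real.norm_eq_abs, Real.norm_eq_abs,
          abs_div, abs_two, abs_of_pos hvpos, ← mul_assoc]
      · rw [norm_smul, Real.norm_eq_abs, hγ1t, mul_one, abs_div, abs_mul,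
          abs_of_pos hvpos, abs_two]
  refine key.trans ?_
  rw [hrp]
  have h1 : |deriv (deriv w) (lam t₀)| * v / 2 ≤ |deriv (deriv w) (lam t₀)| * v := by
    have : 0 ≤ |deriv (deriv w) (lam t₀)| * v := by positivity
    linarith
  nlinarith [abs_nonneg (deriv w (lam t₀)), hvpos.le, hA, hB0]
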